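/- For n ≥ 5 and 3 ≤ j < i ≤ n−1, deleting the final letter j from a member of C_{n,i,j} (and standardizing by decreasing all letters greater than j by 1) gives a bijection onto C_{n−1,i−1} := ⋃_{k≠i−1} C_{n−1,k,i−1}; hence c(n,i,j) = c(n−1,i−1) where c(n−1,i−1) := Σ_{k≠i−1} c(n−1,k,i−1). -/

import Mathlib

open List

/-- `w` is a linear permutation of `[n] = {1,…,n}` written in one-line notation. -/
def IsPermOf (n : ℕ) (w : List ℕ) : Prop :=
  w.Perm ((List.range n).map (· + 1))

/-- occurrence of the vincular pattern 1̄2̄3 : positions a, a+1, c with c > a+1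
forming an increasing triple. -/
def Occ123 (w : List ℕ) : Prop :=
  ∃ a c, a + 1 < c ∧ c < w.length ∧
    w.getD a 0 < w.getD (a + 1) 0 ∧ w.getD (a + 1) 0 < w.getD c 0

/-- occurrence of the vincular pattern 41\overline{23} : positions a < b < c (and c+1)
with w_b < w_c < w_{c+1} < w_a. -/
def Occ4123 (w : List ℕ) : Prop :=
  ∃ a b c, a < b ∧ b < c ∧ c + 1 < w.length ∧
    w.getD b 0 < w.getD c 0 ∧ w.getD c 0 < w.getD (c + 1) 0 ∧
    w.getD (c + 1) 0 < w.getD a 0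

/-- occurrence of the vincular pattern 1\overline{23} : positions a < b (and b+1)
forming an increasing triple. -/
def Occ1_23 (w : List ℕ) : Prop :=
  ∃ a b, a < b ∧ b + 1 < w.length ∧
    w.getD a 0 < w.getD b 0 ∧ w.getD b 0 < w.getD (b + 1) 0

/-- occurrence of the vincular pattern \overline{23}41 : positions a, a+1, c, d with
a+1 < c < d and w_d < w_a < w_{a+1} < w_c. -/
def Occ2341 (w : List ℕ) : Prop :=
  ∃ a c d, a + 1 < c ∧ c < d ∧ d < w.length ∧
    w.getD d 0 < w.getD a 0 ∧ w.getD a 0 < w.getD (a + 1) 0 ∧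
    w.getD (a + 1) 0 < w.getD c 0

/-- a circular permutation (represented by any linear reading `w`) avoids
\overline{23}41 iff no cyclic rotation of `w` contains it. -/
def CircAvoids2341 (w : List ℕ) : Prop := ∀ k, ¬ Occ2341 (w.rotate k)

/-- the set `L_n` of linear permutations of `[n]` avoiding both 1̄2̄3 and 41\overline{23}. -/
def Lset (n : ℕ) : Set (List ℕ) :=
  {w | IsPermOf n w ∧ ¬ Occ123 w ∧ ¬ Occ4123 w}

/-- the permutation (n−1)(n−2)⋯1 n. -/
def excludedPerm (n : ℕ) : List ℕ :=
  ((List.range (n - 1)).map (· + 1)).reverse ++ [n]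

/-- `L_n^* = L_n \ {(n−1)(n−2)⋯1n}`. -/
def Lstar (n : ℕ) : Set (List ℕ) := Lset n \ {excludedPerm n}

/-- `B_n`: members of `L_n^*` in which 1 occurs to the right of n. -/
def Bset (n : ℕ) : Set (List ℕ) :=
  {w ∈ Lstar n | w.idxOf n < w.idxOf 1}

/-- `C_n`: members of `L_n^*` in which 1 occurs to the left of n and 2 to its right. -/
def Cset (n : ℕ) : Set (List ℕ) :=
  {w ∈ Lstar n | w.idxOf 1 < w.idxOf n ∧ w.idxOf n < w.idxOf 2}

/-- members of `B_n` ending in the two letters i, j. -/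
def Bnij (n i j : ℕ) : Set (List ℕ) :=
  {w ∈ Bset n | ∃ u, w = u ++ [i, j]}

/-- members of `C_n` ending in the two letters i, j. -/
def Cnij (n i j : ℕ) : Set (List ℕ) :=
  {w ∈ Cset n | ∃ u, w = u ++ [i, j]}

noncomputable def bcount (n i j : ℕ) : ℕ := (Bnij n i j).ncard
noncomputable def ccount (n i j : ℕ) : ℕ := (Cnij n i j).ncard

/-- `b(n,j)`: the number of members of `B_n` ending in the letter j. -/
noncomputable def bLast (n j : ℕ) : ℕ := Set.ncard {w ∈ Bset n | ∃ u, w = u ++ [j]}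

/-- `c(n,j)`: the number of members of `C_n` ending in the letter j. -/
noncomputable def cLast (n j : ℕ) : ℕ := Set.ncard {w ∈ Cset n | ∃ u, w = u ++ [j]}

/-- `V_n`: linear permutations of `[n]` avoiding both 1̄2̄3 and 1\overline{23}. -/
def Vset (n : ℕ) : Set (List ℕ) :=
  {w | IsPermOf n w ∧ ¬ Occ123 w ∧ ¬ Occ1_23 w}

/-- `v(n,j)`: the number of members of `V_n` ending in the letter j. -/
noncomputable def vcount (n j : ℕ) : ℕ := Set.ncard {w ∈ Vset n | ∃ u, w = u ++ [j]}

/-- deletion of the final letter followed by standardization at level `j`. -/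
def delStd (j : ℕ) (w : List ℕ) : List ℕ :=
  w.dropLast.map (fun x => if j < x then x - 1 else x)

-- helpers

def sg (j x : ℕ) : ℕ := if j < x then x - 1 else x
def tu (j y : ℕ) : ℕ := if j ≤ y then y + 1 else y

lemma sg_tu (j y : ℕ) : sg j (tu j y) = y := by simp only [sg, tu]; split_ifs <;> omega
lemma tu_sg (j x : ℕ) (hx : x ≠ j) : tu j (sg j x) = x := by
  simp only [sg, tu]; split_ifs <;> omega
lemma sg_lt {j x y : ℕ} (h : sg j x < sg j y) : x < y := by
  simp only [sg] at h; split_ifs at h <;> omega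
lemma tu_lt_iff {j x y : ℕ} : tu j x < tu j y ↔ x < y := by
  simp only [tu]; split_ifs <;> omega
lemma tu_inj {j : ℕ} : Function.Injective (tu j) := by
  intro x y h; simp only [tu] at h; split_ifs at h <;> omega
lemma tu_ne (j y : ℕ) : tu j y ≠ j := by simp only [tu]; split_ifs <;> omega

lemma getD_map (f : ℕ → ℕ) (l : List ℕ) (k : ℕ) (h : k < l.length) :
    (l.map f).getD k 0 = f (l.getD k 0) := by
  rw [List.getD_eq_getElem _ _ (by simpa using h), List.getD_eq_getElem _ _ h]
  simp

lemma getD_append_lt (l l' : List ℕ) (k : ℕ) (h : k < l.length) :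
    (l ++ l').getD k 0 = l.getD k 0 := by
  rw [List.getD_eq_getElem _ _ (by simp; omega), List.getD_eq_getElem _ _ h]
  exact List.getElem_append_left h

lemma getD_concat_len (l : List ℕ) (a : ℕ) : (l ++ [a]).getD l.length 0 = a := by
  rw [List.getD_eq_getElem _ _ (by simp)]
  simp

lemma mem_base {n x : ℕ} : x ∈ (List.range n).map (· + 1) ↔ 1 ≤ x ∧ x ≤ n := by
  simp only [List.mem_map, List.mem_range]
  constructor
  · rintro ⟨a, ha, rfl⟩; omega
  · rintro ⟨h1, h2⟩; exact ⟨x - 1, by omega, by omega⟩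

lemma base_nodup (n : ℕ) : ((List.range n).map (· + 1)).Nodup :=
  (List.nodup_range).map (fun a b h => by omega)

lemma isPermOf_iff {n : ℕ} {w : List ℕ} :
    IsPermOf n w ↔ w.Nodup ∧ ∀ x, x ∈ w ↔ 1 ≤ x ∧ x ≤ n := by
  constructor
  · intro h
    exact ⟨h.nodup_iff.2 (base_nodup n), fun x => by rw [h.mem_iff, mem_base]⟩
  · rintro ⟨hnd, hmem⟩
    refine (List.perm_ext_iff_of_nodup hnd (base_nodup n)).2 fun a => ?_
    rw [hmem, mem_base]

lemma isPermOf_length {n : ℕ} {w : List ℕ} (h : IsPermOf n w) : w.length = n := by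
  simpa using h.length_eq

lemma indexOf_map_tu (j y : ℕ) (v : List ℕ) :
    (v.map (tu j)).idxOf (tu j y) = v.idxOf y := by
  induction v with
  | nil => simp
  | cons b l ih =>
    rw [List.map_cons, List.idxOf_cons, List.idxOf_cons]
    by_cases h : b = y
    · simp [h]
    · have h2 : tu j b ≠ tu j y := fun hc => h (tu_inj hc)
      simp [cond_eq_if, beq_iff_eq, h, h2, ih]

lemma indexOf_map_sg (j y : ℕ) (v : List ℕ) (hv : ∀ x ∈ v, x ≠ j) :
    (v.map (sg j)).idxOf y = v.idxOf (tu j y) := by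
  induction v with
  | nil => simp
  | cons b l ih =>
    have hb : b ≠ j := hv b (by simp)
    rw [List.map_cons, List.idxOf_cons, List.idxOf_cons]
    by_cases h : b = tu j y
    · simp [h, sg_tu]
    · have h2 : sg j b ≠ y := fun hc => h (by rw [← hc, tu_sg j b hb])
      simp [cond_eq_if, beq_iff_eq, h, h2, ih (fun x hx => hv x (by simp [hx]))]

lemma last_eq_of_concat_eq {l l' : List ℕ} {a b : ℕ} (h : l ++ [a] = l' ++ [b]) : a = b := by
  have := congrArg List.reverse h
  simp at this
  exact this.1

lemma mem_Cset {n : ℕ} {w : List ℕ} : w ∈ Cset n ↔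
    (IsPermOf n w ∧ ¬Occ123 w ∧ ¬Occ4123 w) ∧ w ≠ excludedPerm n ∧
    w.idxOf 1 < w.idxOf n ∧ w.idxOf n < w.idxOf 2 := by
  simp only [Cset, Lstar, Lset, Set.mem_setOf_eq, Set.mem_diff, Set.mem_singleton_iff]
  tauto

lemma mem_Cnij {n i j : ℕ} {w : List ℕ} : w ∈ Cnij n i j ↔
    ((IsPermOf n w ∧ ¬Occ123 w ∧ ¬Occ4123 w) ∧ w ≠ excludedPerm n ∧
    w.idxOf 1 < w.idxOf n ∧ w.idxOf n < w.idxOf 2) ∧ ∃ u, w = u ++ [i, j] := by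
  simp only [Cnij, Set.mem_setOf_eq, mem_Cset]

lemma forward (n i j : ℕ) (hn : 5 ≤ n) (hj : 3 ≤ j) (hji : j < i) (hi : i ≤ n - 1) :
    Set.MapsTo (delStd j) (Cnij n i j) {w ∈ Cset (n - 1) | ∃ u, w = u ++ [i - 1]} := by
  intro w hw
  obtain ⟨⟨⟨hperm, h123, h4123⟩, hnex, hidx⟩, u, hwu⟩ := mem_Cnij.1 hw
  obtain ⟨hnd, hmem⟩ := isPermOf_iff.1 hperm
  have hlen : w.length = n := isPermOf_length hperm
  set p : List ℕ := u ++ [i] with hp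
  have hwp : w = p ++ [j] := by rw [hwu, hp]; simp
  have hplen : p.length = n - 1 := by
    have h := hlen; rw [hwp] at h; simp at h; omega
  have hndp : (p ++ [j]).Nodup := hwp ▸ hnd
  have hjp : j ∉ p := by
    simp [List.nodup_append] at hndp; tauto
  have hpne : ∀ x ∈ p, x ≠ j := fun x hx hxj => hjp (hxj ▸ hx)
  have hdrop : w.dropLast = p := by rw [hwp]; simp
  have hF : delStd j w = p.map (sg j) := by
    simp only [delStd]; rw [hdrop]; rfl
  have hget : ∀ k, k < n - 1 → (delStd j w).getD k 0 = sg j (w.getD k 0) := by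
    intro k hk
    rw [hF, getD_map _ _ _ (show k < p.length by omega)]
    have hh : w.getD k 0 = p.getD k 0 := by
      rw [hwp]; exact getD_append_lt p [j] k (by omega)
    rw [hh]
  have hFlen : (delStd j w).length = n - 1 := by rw [hF]; simp [hplen]
  have hFperm : IsPermOf (n - 1) (delStd j w) := by
    rw [hF, isPermOf_iff]
    constructor
    · refine List.Nodup.map_on ?_ ((List.nodup_append.1 hndp).1)
      intro x hx y hy hxy
      have h := congrArg (tu j) hxy
      rwa [tu_sg _ _ (hpne x hx), tu_sg _ _ (hpne y hy)] at h
    · intro x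
      simp only [List.mem_map]
      constructor
      · rintro ⟨y, hy, rfl⟩
        have hyw : y ∈ w := by rw [hwp]; exact List.mem_append_left _ hy
        have hy2 := (hmem y).1 hyw
        have hyj := hpne y hy
        simp only [sg]; split_ifs <;> omega
      · intro hx
        refine ⟨tu j x, ?_, sg_tu j x⟩
        have h1 : tu j x ∈ w := by
          rw [hmem]; simp only [tu]; split_ifs <;> omega
        rw [hwp] at h1
        rcases List.mem_append.1 h1 with h | h
        · exact h
        · simp at h; exact absurd h (tu_ne j x)
  have hF123 : ¬ Occ123 (delStd j w) := by
    rintro ⟨a, c, hac, hclen, h1, h2⟩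
    rw [hFlen] at hclen
    rw [hget a (by omega), hget (a + 1) (by omega)] at h1
    rw [hget (a + 1) (by omega), hget c (by omega)] at h2
    exact h123 ⟨a, c, hac, by rw [hlen]; omega, sg_lt h1, sg_lt h2⟩
  have hF4123 : ¬ Occ4123 (delStd j w) := by
    rintro ⟨a, b, c, hab, hbc, hclen, h1, h2, h3⟩
    rw [hFlen] at hclen
    rw [hget b (by omega), hget c (by omega)] at h1
    rw [hget c (by omega), hget (c + 1) (by omega)] at h2
    rw [hget (c + 1) (by omega), hget a (by omega)] at h3
    exact h4123 ⟨a, b, c, hab, hbc, by rw [hlen]; omega, sg_lt h1, sg_lt h2, sg_lt h3⟩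
  have hFne : delStd j w ≠ excludedPerm (n - 1) := by
    intro h
    rw [hF, hp, List.map_append, List.map_singleton, excludedPerm] at h
    have h5 : sg j i = n - 1 := last_eq_of_concat_eq h
    simp only [sg] at h5; split_ifs at h5 <;> omega
  have hmemp : ∀ y, 1 ≤ y → y ≤ n → y ≠ j → y ∈ p := by
    intro y h1 h2 h3
    have hyw : y ∈ w := (hmem y).2 ⟨h1, h2⟩
    rw [hwp] at hyw
    rcases List.mem_append.1 hyw with h | h
    · exact h
    · simp at h; omega
  have hidx1 : (delStd j w).idxOf 1 = w.idxOf 1 := by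
    rw [hF, indexOf_map_sg j 1 p hpne]
    have ht : tu j 1 = 1 := by simp only [tu]; rw [if_neg (by omega : ¬ j ≤ 1)]
    rw [ht, hwp, List.idxOf_append_of_mem (hmemp 1 (by omega) (by omega) (by omega))]
  have hidx2 : (delStd j w).idxOf 2 = w.idxOf 2 := by
    rw [hF, indexOf_map_sg j 2 p hpne]
    have ht : tu j 2 = 2 := by simp only [tu]; rw [if_neg (by omega : ¬ j ≤ 2)]
    rw [ht, hwp, List.idxOf_append_of_mem (hmemp 2 (by omega) (by omega) (by omega))]
  have hidxn : (delStd j w).idxOf (n - 1) = w.idxOf n := by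
    rw [hF, indexOf_map_sg j (n - 1) p hpne]
    have ht : tu j (n - 1) = n := by
      simp only [tu]; rw [if_pos (by omega : j ≤ n - 1)]; omega
    rw [ht, hwp, List.idxOf_append_of_mem (hmemp n (by omega) (by omega) (by omega))]
  refine ⟨mem_Cset.2 ⟨⟨hFperm, hF123, hF4123⟩, hFne, ?_, ?_⟩, ⟨u.map (sg j), ?_⟩⟩
  · rw [hidx1, hidxn]; exact hidx.1
  · rw [hidx2, hidxn]; exact hidx.2
  · rw [hF, hp, List.map_append, List.map_singleton]
    have : sg j i = i - 1 := by simp only [sg]; rw [if_pos hji]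
    rw [this]

lemma mem_Cnij' {n i j : ℕ} {w : List ℕ} :
    w ∈ Cnij n i j ↔ w ∈ Cset n ∧ ∃ u, w = u ++ [i, j] := Iff.rfl

lemma left_inv (n i j : ℕ) (w : List ℕ) (hw : w ∈ Cnij n i j) :
    (delStd j w).map (tu j) ++ [j] = w := by
  obtain ⟨⟨⟨hperm, _, _⟩, _, _⟩, u, hwu⟩ := mem_Cnij.1 hw
  have hnd : w.Nodup := (isPermOf_iff.1 hperm).1
  have hwp : w = (u ++ [i]) ++ [j] := by rw [hwu]; simp
  have hndp : ((u ++ [i]) ++ [j]).Nodup := hwp ▸ hnd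
  have hjp : j ∉ u ++ [i] := by
    simp only [List.mem_append, List.mem_singleton]
    simp [List.nodup_append] at hndp
    rintro (h | h)
    · exact (hndp.2.2 j h).2 rfl
    · omega
  have hdrop : w.dropLast = u ++ [i] := by rw [hwp]; simp
  have hF : delStd j w = (u ++ [i]).map (sg j) := by
    simp only [delStd]; rw [hdrop]; rfl
  rw [hF, List.map_map]
  have hcong : (u ++ [i]).map (tu j ∘ sg j) = u ++ [i] := by
    have h1 : ∀ x ∈ u ++ [i], (tu j ∘ sg j) x = id x := fun x hx =>
      tu_sg j x (fun hxj => hjp (hxj ▸ hx))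
    rw [List.map_congr_left h1, List.map_id]
  rw [hcong, ← hwp]

lemma backward (n i j : ℕ) (hn : 5 ≤ n) (hj : 3 ≤ j) (hji : j < i) (hi : i ≤ n - 1)
    (v : List ℕ) (hv : v ∈ {w ∈ Cset (n - 1) | ∃ u, w = u ++ [i - 1]}) :
    (v.map (tu j) ++ [j]) ∈ Cnij n i j ∧ delStd j (v.map (tu j) ++ [j]) = v := by
  obtain ⟨hvC, u, hvu⟩ := hv
  obtain ⟨⟨hperm, h123, h4123⟩, hnex, hidxa, hidxb⟩ := mem_Cset.1 hvC
  obtain ⟨hnd, hmem⟩ := isPermOf_iff.1 hperm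
  have hlen : v.length = n - 1 := isPermOf_length hperm
  have hmaplen : (v.map (tu j)).length = n - 1 := by simp [hlen]
  have hwlen : (v.map (tu j) ++ [j]).length = n := by simp [hlen]; omega
  have hulen : u.length = n - 2 := by
    have h := hlen; rw [hvu] at h; simp at h; omega
  have hvlast : v.getD (n - 2) 0 = i - 1 := by
    rw [hvu, ← hulen]
    exact getD_concat_len u (i - 1)
  have hget : ∀ k, k < n - 1 → (v.map (tu j) ++ [j]).getD k 0 = tu j (v.getD k 0) := by
    intro k hk
    rw [getD_append_lt _ _ _ (by omega), getD_map _ _ _ (by omega)]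
  have hgetl : (v.map (tu j) ++ [j]).getD (n - 1) 0 = j := by
    rw [← hmaplen]; exact getD_concat_len _ j
  -- delStd inverse
  have hdel : delStd j (v.map (tu j) ++ [j]) = v := by
    have hdrop : (v.map (tu j) ++ [j]).dropLast = v.map (tu j) := by simp
    have h2 : delStd j (v.map (tu j) ++ [j]) = (v.map (tu j)).map (sg j) := by
      simp only [delStd]; rw [hdrop]; rfl
    rw [h2, List.map_map]
    have h1 : ∀ x ∈ v, (sg j ∘ tu j) x = id x := fun x _ => sg_tu j x
    rw [List.map_congr_left h1, List.map_id]
  refine ⟨mem_Cnij.2 ⟨⟨⟨?_, ?_, ?_⟩, ?_, ?_, ?_⟩, u.map (tu j), ?_⟩, hdel⟩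
  · -- IsPermOf n
    rw [isPermOf_iff]
    constructor
    · rw [List.nodup_append]
      refine ⟨hnd.map tu_inj, List.nodup_singleton j, ?_⟩
      intro x hx b hx2 hxb
      rw [← hxb] at hx2
      simp at hx2
      obtain ⟨y, _, hy⟩ := List.mem_map.1 hx
      exact tu_ne j y (hx2 ▸ hy)
    · intro x
      rw [List.mem_append]
      simp only [List.mem_map, List.mem_singleton]
      constructor
      · rintro (⟨y, hy, rfl⟩ | rfl)
        · have := (hmem y).1 hy; simp only [tu]; split_ifs <;> omega
        · omega
      · intro hx
        by_cases hxj : x = j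
        · right; exact hxj
        · left
          refine ⟨sg j x, (hmem _).2 ?_, tu_sg j x hxj⟩
          simp only [sg]; split_ifs <;> omega
  · -- no 123
    rintro ⟨a, c, hac, hclen, h1, h2⟩
    rw [hwlen] at hclen
    rcases Nat.lt_or_ge c (n - 1) with hc | hc
    · rw [hget a (by omega), hget (a + 1) (by omega)] at h1
      rw [hget (a + 1) (by omega), hget c (by omega)] at h2
      exact h123 ⟨a, c, hac, by omega, tu_lt_iff.1 h1, tu_lt_iff.1 h2⟩
    · have hceq : c = n - 1 := by omega
      subst hceq
      rw [hget a (by omega), hget (a + 1) (by omega)] at h1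
      rw [hget (a + 1) (by omega), hgetl] at h2
      have hva1 : v.getD (a + 1) 0 < j ∧ tu j (v.getD (a + 1) 0) = v.getD (a + 1) 0 := by
        constructor <;> (simp only [tu] at h2 ⊢; split_ifs at h2 ⊢ <;> omega)
      by_cases ha2 : a + 1 = n - 2
      · rw [ha2, hvlast] at hva1; omega
      · refine h123 ⟨a, n - 2, by omega, by omega, tu_lt_iff.1 h1, ?_⟩
        rw [hvlast]; omega
  · -- no 4123
    rintro ⟨a, b, c, hab, hbc, hclen, h1, h2, h3⟩
    rw [hwlen] at hclen
    rcases Nat.lt_or_ge (c + 1) (n - 1) with hc | hc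
    · rw [hget b (by omega), hget c (by omega)] at h1
      rw [hget c (by omega), hget (c + 1) (by omega)] at h2
      rw [hget (c + 1) (by omega), hget a (by omega)] at h3
      exact h4123 ⟨a, b, c, hab, hbc, by omega, tu_lt_iff.1 h1, tu_lt_iff.1 h2, tu_lt_iff.1 h3⟩
    · have hceq : c + 1 = n - 1 := by omega
      rw [hget c (by omega)] at h2
      rw [hceq, hgetl] at h2
      have : v.getD c 0 = i - 1 := by rw [show c = n - 2 by omega]; exact hvlast
      rw [this] at h2
      simp only [tu] at h2; split_ifs at h2 <;> omega
  · -- not excluded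
    intro h
    rw [excludedPerm] at h
    have := last_eq_of_concat_eq h
    omega
  · -- indexOf 1 < indexOf n
    have ht1 : tu j 1 = 1 := by simp only [tu]; rw [if_neg (by omega : ¬ j ≤ 1)]
    have htn : tu j (n - 1) = n := by
      simp only [tu]; rw [if_pos (by omega : j ≤ n - 1)]; omega
    have h1m : (1 : ℕ) ∈ v.map (tu j) := by
      rw [← ht1]; exact List.mem_map_of_mem ((hmem 1).2 (by omega))
    have hnm : n ∈ v.map (tu j) := by
      rw [← htn]; exact List.mem_map_of_mem ((hmem (n - 1)).2 (by omega))
    rw [List.idxOf_append_of_mem h1m, List.idxOf_append_of_mem hnm]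
    have e1 : (v.map (tu j)).idxOf 1 = v.idxOf 1 := by
      conv_lhs => rw [← ht1]
      rw [indexOf_map_tu]
    have en : (v.map (tu j)).idxOf n = v.idxOf (n - 1) := by
      conv_lhs => rw [← htn]
      rw [indexOf_map_tu]
    rw [e1, en]; exact hidxa
  · -- indexOf n < indexOf 2
    have ht2 : tu j 2 = 2 := by simp only [tu]; rw [if_neg (by omega : ¬ j ≤ 2)]
    have htn : tu j (n - 1) = n := by
      simp only [tu]; rw [if_pos (by omega : j ≤ n - 1)]; omega
    have h2m : (2 : ℕ) ∈ v.map (tu j) := by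
      rw [← ht2]; exact List.mem_map_of_mem ((hmem 2).2 (by omega))
    have hnm : n ∈ v.map (tu j) := by
      rw [← htn]; exact List.mem_map_of_mem ((hmem (n - 1)).2 (by omega))
    rw [List.idxOf_append_of_mem h2m, List.idxOf_append_of_mem hnm]
    have e2 : (v.map (tu j)).idxOf 2 = v.idxOf 2 := by
      conv_lhs => rw [← ht2]
      rw [indexOf_map_tu]
    have en : (v.map (tu j)).idxOf n = v.idxOf (n - 1) := by
      conv_lhs => rw [← htn]
      rw [indexOf_map_tu]
    rw [e2, en]; exact hidxb
  · -- ends in i, j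
    rw [hvu, List.map_append, List.map_singleton]
    have hti : tu j (i - 1) = i := by
      simp only [tu]; rw [if_pos (by omega : j ≤ i - 1)]; omega
    rw [hti, List.append_assoc]; rfl

lemma cset_finite (m : ℕ) : (Cset m).Finite := by
  apply Set.Finite.subset (List.finite_toSet ((List.range m).map (· + 1)).permutations)
  intro w hw
  obtain ⟨⟨hperm, _, _⟩, _, _⟩ := mem_Cset.1 hw
  simpa [List.mem_permutations, IsPermOf] using hperm

lemma cnij_finite (m k l : ℕ) : (Cnij m k l).Finite :=
  (cset_finite m).subset (fun _ hw => (mem_Cnij'.1 hw).1)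

lemma penult_eq {u u' : List ℕ} {a b c : ℕ} (h : u ++ [a, c] = u' ++ [b, c]) : a = b := by
  have h2 := congrArg List.reverse h
  simp at h2
  exact h2.1

lemma decomp (n i j : ℕ) (hn : 5 ≤ n) (hj : 3 ≤ j) (hji : j < i) (hi : i ≤ n - 1) :
    {w ∈ Cset (n - 1) | ∃ u, w = u ++ [i - 1]} =
      ⋃ k ∈ (Finset.Icc 1 (n - 1)).erase (i - 1), Cnij (n - 1) k (i - 1) := by
  ext w
  simp only [Set.mem_setOf_eq, Set.mem_iUnion, Finset.mem_erase, Finset.mem_Icc]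
  constructor
  · rintro ⟨hwC, u, rfl⟩
    obtain ⟨⟨hperm, _, _⟩, _, _⟩ := mem_Cset.1 hwC
    obtain ⟨hnd, hmem⟩ := isPermOf_iff.1 hperm
    have hlen : (u ++ [i - 1]).length = n - 1 := isPermOf_length hperm
    have hulen : u.length = n - 2 := by simp at hlen; omega
    rcases List.eq_nil_or_concat u with rfl | ⟨u', k, rfl⟩
    · simp at hulen; omega
    · simp only [List.concat_eq_append] at hmem hnd hwC hulen ⊢
      have hkw : k ∈ (u' ++ [k]) ++ [i - 1] := by simp
      have hk := (hmem k).1 hkw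
      have hknei : k ≠ i - 1 := by
        have hnd2 := hnd
        rw [List.nodup_append] at hnd2
        intro heq
        exact hnd2.2.2 _ (show i - 1 ∈ u' ++ [k] by simp [heq]) _ (by simp) rfl
      exact ⟨k, ⟨hknei, hk.1, hk.2⟩, mem_Cnij'.2 ⟨hwC, u', by simp⟩⟩
  · rintro ⟨k, _, hw⟩
    obtain ⟨hwC, u', hwu⟩ := mem_Cnij'.1 hw
    exact ⟨hwC, u' ++ [k], by rw [hwu]; simp⟩

theorem stmt8 (n i j : ℕ) (hn : 5 ≤ n) (hj : 3 ≤ j) (hji : j < i) (hi : i ≤ n - 1) :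
    Set.BijOn (delStd j) (Cnij n i j) {w ∈ Cset (n - 1) | ∃ u, w = u ++ [i - 1]} ∧
    ccount n i j = ∑ k ∈ (Finset.Icc 1 (n - 1)).erase (i - 1), ccount (n - 1) k (i - 1) := by
  have hbij : Set.BijOn (delStd j) (Cnij n i j) {w ∈ Cset (n - 1) | ∃ u, w = u ++ [i - 1]} := by
    refine ⟨forward n i j hn hj hji hi, ?_, ?_⟩
    · intro w hw w' hw' h
      rw [← left_inv n i j w hw, ← left_inv n i j w' hw', h]
    · intro v hv
      obtain ⟨hm, hd⟩ := backward n i j hn hj hji hi v hv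
      exact ⟨_, hm, hd⟩
  refine ⟨hbij, ?_⟩
  have h1 : ccount n i j = ({w ∈ Cset (n - 1) | ∃ u, w = u ++ [i - 1]}).ncard := by
    rw [ccount, ← hbij.image_eq, Set.ncard_image_of_injOn hbij.injOn]
  rw [h1, decomp n i j hn hj hji hi]
  have hcoe : (⋃ k ∈ (Finset.Icc 1 (n - 1)).erase (i - 1), Cnij (n - 1) k (i - 1)) =
      ↑(((Finset.Icc 1 (n - 1)).erase (i - 1)).biUnion
        (fun k => (cnij_finite (n - 1) k (i - 1)).toFinset)) := by
    ext w
    simp only [Set.mem_iUnion, Finset.coe_biUnion, Finset.mem_coe, Set.Finite.mem_toFinset]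
  have hdisj : ∀ a ∈ (Finset.Icc 1 (n - 1)).erase (i - 1),
      ∀ b ∈ (Finset.Icc 1 (n - 1)).erase (i - 1), a ≠ b →
      Disjoint ((cnij_finite (n - 1) a (i - 1)).toFinset)
        ((cnij_finite (n - 1) b (i - 1)).toFinset) := by
    intro a _ b _ hab
    rw [Finset.disjoint_left]
    intro w hwa hwb
    rw [Set.Finite.mem_toFinset] at hwa hwb
    obtain ⟨_, u1, e1⟩ := mem_Cnij'.1 hwa
    obtain ⟨_, u2, e2⟩ := mem_Cnij'.1 hwb
    exact hab (penult_eq (e1.symm.trans e2))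
  rw [hcoe, Set.ncard_coe_finset, Finset.card_biUnion hdisj]
  exact Finset.sum_congr rfl
    (fun k _ => by rw [ccount, Set.ncard_eq_toFinset_card _ (cnij_finite (n - 1) k (i - 1))])
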